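/- Let p ≥ 2 be an even integer and let S be a continuous function on [0,T] in V_p(π) admitting a continuous local time L^{p,c} of order p (uniform limit of discrete local times, jointly continuous). Then for every continuous function g : ℝ → ℝ and every t ∈ [0,T], ∫_0^t g(S(u)) d[S]^p(u) = p ∫_ℝ g(x) L_t^{p,c}(x) dx, where the left side is a Lebesgue-Stieltjes integral against the continuous nondecreasing p-th variation function [S]^p. -/

import Mathlib

open Filter MeasureTheory Set

/-- A nested sequence of partitions `0 = t_0^n < t_1^n < ... < t_{N(n)}^n = T` of `[0, T]`. -/
structure PartitionSeq (T : ℝ) where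
  N : ℕ → ℕ
  pos : ∀ n, 0 < N n
  pt : ℕ → ℕ → ℝ
  pt_zero : ∀ n, pt n 0 = 0
  pt_last : ∀ n, pt n (N n) = T
  pt_mono : ∀ n, ∀ j, j < N n → pt n j < pt n (j + 1)
  nested : ∀ n, ∀ j, j ≤ N n → ∃ j', j' ≤ N (n + 1) ∧ pt (n + 1) j' = pt n j

/-- Oscillation of `S` along the partition `π_n`. -/
noncomputable def oscP {T : ℝ} (S : ℝ → ℝ) (P : PartitionSeq T) (n : ℕ) : ℝ :=
  sSup {y | ∃ j < P.N n, ∃ u ∈ Icc (P.pt n j) (P.pt n (j + 1)),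
    ∃ v ∈ Icc (P.pt n j) (P.pt n (j + 1)), y = |S u - S v|}

/-- Mesh of the partition `π_n`. -/
noncomputable def meshP {T : ℝ} (P : PartitionSeq T) (n : ℕ) : ℝ :=
  sSup {y | ∃ j < P.N n, y = P.pt n (j + 1) - P.pt n j}

/-- Partial sums `Σ_{t_j ≤ t} |S(t_{j+1}) - S(t_j)|^p` of `p`-th variation along `π_n`. -/
noncomputable def pvarSum {T : ℝ} (S : ℝ → ℝ) (P : PartitionSeq T) (p : ℝ) (n : ℕ) (t : ℝ) : ℝ :=
  ∑ j ∈ Finset.range (P.N n),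
    if P.pt n j ≤ t then |S (P.pt n (j + 1)) - S (P.pt n j)| ^ p else 0

/-- Discrete local time of order `p` of `S` along `π_n`:
`L_t^{π_n;p}(x) = Σ_{t_j ≤ t} 1_{⦇S(t_j),S(t_{j+1})⦈}(x) |S(t_{j+1}) - x|^{p-1}`. -/
noncomputable def discLT {T : ℝ} (S : ℝ → ℝ) (P : PartitionSeq T) (p : ℕ) (n : ℕ)
    (t x : ℝ) : ℝ :=
  ∑ j ∈ Finset.range (P.N n),
    if P.pt n j ≤ t then
      Set.indicator (Set.uIoc (S (P.pt n j)) (S (P.pt n (j + 1))))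
        (fun _ => |S (P.pt n (j + 1)) - x| ^ (p - 1)) x
    else 0

/-- `S` has a continuous local time `L` of order `p` along `P`: the oscillations tend to `0`,
the discrete local times converge uniformly in `x` for each `t ∈ [0,T]`, and the limit is
jointly continuous. -/
def HasCLT {T : ℝ} (P : PartitionSeq T) (p : ℕ) (S : ℝ → ℝ) (L : ℝ → ℝ → ℝ) : Prop :=
  Tendsto (oscP S P) atTop (nhds 0) ∧
  (∀ t ∈ Icc (0 : ℝ) T, TendstoUniformly (fun n x => discLT S P p n t x) (fun x => L t x) atTop) ∧
  Continuous (fun q : ℝ × ℝ => L q.1 q.2)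

/-- `S ∈ V_p(π)` with `p`-th variation function `V`. -/
def HasPVar {T : ℝ} (P : PartitionSeq T) (p : ℝ) (S : ℝ → ℝ) (V : ℝ → ℝ) : Prop :=
  Tendsto (oscP S P) atTop (nhds 0) ∧
  ContinuousOn V (Icc 0 T) ∧ MonotoneOn V (Icc 0 T) ∧
  ∀ t ∈ Icc (0 : ℝ) T, Tendsto (fun n => pvarSum S P p n t) atTop (nhds (V t))
section Helpers

variable {T : ℝ}

lemma ptP_add_le (P : PartitionSeq T) (n : ℕ) :
    ∀ (m j : ℕ), j + m ≤ P.N n → P.pt n j ≤ P.pt n (j + m) := by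
  intro m
  induction m with
  | zero => intro j _; exact le_rfl
  | succ m ih =>
    intro j h
    have h1 : j + m < P.N n := by omega
    calc P.pt n j ≤ P.pt n (j + m) := ih j h1.le
      _ ≤ P.pt n (j + m + 1) := (P.pt_mono n _ h1).le

lemma ptP_le (P : PartitionSeq T) (n : ℕ) {j k : ℕ} (hjk : j ≤ k) (hk : k ≤ P.N n) :
    P.pt n j ≤ P.pt n k := by
  have := ptP_add_le P n (k - j) j (by omega)
  rwa [Nat.add_sub_cancel' hjk] at this

lemma ptP_mem (P : PartitionSeq T) (n : ℕ) {j : ℕ} (hj : j ≤ P.N n) :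
    P.pt n j ∈ Icc (0 : ℝ) T := by
  constructor
  · have := ptP_le P n (Nat.zero_le j) hj
    rwa [P.pt_zero n] at this
  · have := ptP_le P n hj le_rfl
    rwa [P.pt_last n] at this

lemma ptP_pos (P : PartitionSeq T) (n : ℕ) {j : ℕ} (hj1 : 1 ≤ j) (hj : j ≤ P.N n) :
    0 < P.pt n j := by
  have h1 : P.pt n 0 < P.pt n 1 := P.pt_mono n 0 (by omega)
  have h2 : P.pt n 1 ≤ P.pt n j := ptP_le P n hj1 hj
  have := P.pt_zero n
  linarith

lemma sum_if_step (s : ℕ → ℝ) (hs : Monotone s) (K : ℕ) (u c : ℝ) :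
    (∑ i ∈ Finset.range K, if s i < u ∧ u ≤ s (i + 1) then c else 0)
      = if s 0 < u ∧ u ≤ s K then c else 0 := by
  induction K with
  | zero =>
    rw [Finset.sum_range_zero, if_neg]
    rintro ⟨h1, h2⟩
    exact absurd (h1.trans_le h2) (lt_irrefl _)
  | succ K ih =>
    rw [Finset.sum_range_succ, ih]
    have h0K : s 0 ≤ s K := hs (Nat.zero_le K)
    have hK : s K ≤ s (K + 1) := hs (Nat.le_succ K)
    by_cases h1 : s 0 < u ∧ u ≤ s K
    · rw [if_pos h1, if_neg (by rintro ⟨a, b⟩; exact absurd (h1.2) (not_le.mpr a)),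
        if_pos ⟨h1.1, h1.2.trans hK⟩, add_zero]
    · rw [if_neg h1, zero_add]
      by_cases h2 : s K < u ∧ u ≤ s (K + 1)
      · rw [if_pos h2, if_pos ⟨lt_of_le_of_lt h0K h2.1, h2.2⟩]
      · rw [if_neg h2, if_neg]
        rintro ⟨a, b⟩
        rcases le_or_gt u (s K) with h | h
        · exact h1 ⟨a, h⟩
        · exact h2 ⟨h, b⟩

end Helpers

open intervalIntegral in
lemma intK (m : ℕ) (a b : ℝ) :
    ∫ x in Set.uIoc a b, |b - x| ^ m = |b - a| ^ (m + 1) / (m + 1) := by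
  rcases le_total a b with hab | hab
  · rw [Set.uIoc_of_le hab, ← intervalIntegral.integral_of_le hab]
    have hcongr : ∀ x ∈ Set.uIcc a b, |b - x| ^ m = (b - x) ^ m := by
      intro x hx
      rw [Set.uIcc_of_le hab] at hx
      rw [abs_of_nonneg (by linarith [hx.2])]
    rw [intervalIntegral.integral_congr fun x hx => hcongr x hx]
    rw [intervalIntegral.integral_comp_sub_left (fun x : ℝ => x ^ m) b, sub_self]
    rw [integral_pow]
    rw [abs_of_nonneg (by linarith : (0:ℝ) ≤ b - a)]
    ring
  · rw [Set.uIoc_of_ge hab, ← intervalIntegral.integral_of_le hab]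
    have hcongr : ∀ x ∈ Set.uIcc b a, |b - x| ^ m = (x - b) ^ m := by
      intro x hx
      rw [Set.uIcc_of_le hab] at hx
      rw [abs_sub_comm, abs_of_nonneg (by linarith [hx.1])]
    rw [intervalIntegral.integral_congr fun x hx => hcongr x hx]
    rw [intervalIntegral.integral_comp_sub_right (fun x : ℝ => x ^ m) b, sub_self]
    rw [integral_pow]
    rw [abs_of_nonpos (by linarith : b - a ≤ 0)]
    ring

lemma stepC {T : ℝ} (P : PartitionSeq T) (w : ℕ → ℕ → ℝ)
    (hw : ∀ n j, 0 ≤ w n j) (V : StieltjesFunction ℝ)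
    (hvar : ∀ s ∈ Icc (0 : ℝ) T, Tendsto
      (fun n => ∑ j ∈ Finset.range (P.N n), if P.pt n j ≤ s then w n j else 0)
      atTop (nhds (V s)))
    (f : ℝ → ℝ) (hf : Continuous f) (t : ℝ) (ht : t ∈ Icc (0 : ℝ) T) :
    Tendsto (fun n => ∑ j ∈ Finset.range (P.N n),
        if 0 < P.pt n j ∧ P.pt n j ≤ t then f (P.pt n j) * w n j else 0)
      atTop (nhds (∫ u in Ioc (0 : ℝ) t, f u ∂V.measure)) := by
  obtain ⟨ht0, htT⟩ := ht
  have hfu := (isCompact_Icc (a := (0:ℝ)) (b := T)).uniformContinuousOn_of_continuous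
    hf.continuousOn
  rw [Metric.uniformContinuousOn_iff] at hfu
  rw [Metric.tendsto_atTop]
  intro ε hε
  set Cb : ℝ := |V t| + |V 0| + 2 with hCbdef
  have hCb0 : 0 < Cb := by positivity
  set ε' : ℝ := ε / (4 * Cb) with hε'def
  have hε' : 0 < ε' := by positivity
  obtain ⟨δ, hδ0, hδ⟩ := hfu ε' hε'
  -- the grid
  set K : ℕ := ⌈t / δ⌉₊ + 1 with hKdef
  have hK0 : 0 < K := Nat.succ_pos _
  have hKne : (K : ℝ) ≠ 0 := Nat.cast_ne_zero.mpr hK0.ne'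
  have hKpos : (0:ℝ) < K := Nat.cast_pos.mpr hK0
  have hgrid : t / K < δ := by
    rw [div_lt_iff₀ hKpos]
    have h1 : t / δ < K := by
      have := Nat.lt_succ_floor ⌈t / δ⌉₊
      calc t / δ ≤ ⌈t / δ⌉₊ := Nat.le_ceil _
        _ < K := by exact_mod_cast Nat.lt_succ_self _
    calc t = (t / δ) * δ := by field_simp
      _ < K * δ := by apply mul_lt_mul_of_pos_right h1 hδ0
      _ = δ * K := mul_comm _ _
  set s : ℕ → ℝ := fun i => i * (t / K) with hsdef
  have htK0 : 0 ≤ t / K := div_nonneg ht0 hKpos.le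
  have hsmono : Monotone s := by
    intro i j hij
    exact mul_le_mul_of_nonneg_right (Nat.cast_le.mpr hij) htK0
  have hs0 : s 0 = 0 := by simp [hsdef]
  have hsK : s K = t := by simp only [hsdef]; field_simp
  have hstep : ∀ i, s (i + 1) - s i = t / K := by
    intro i; simp only [hsdef]; push_cast; ring
  have hsmem : ∀ i ≤ K, s i ∈ Icc (0 : ℝ) T := by
    intro i hi
    constructor
    · exact mul_nonneg (Nat.cast_nonneg i) htK0
    · calc s i ≤ s K := hsmono hi
        _ = t := hsK
        _ ≤ T := htT
  -- notation
  set F : ℕ → ℝ → ℝ := fun n r =>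
    ∑ j ∈ Finset.range (P.N n), if P.pt n j ≤ r then w n j else 0 with hFdef
  have hFincr : ∀ n (a b : ℝ), a ≤ b → F n b - F n a
      = ∑ j ∈ Finset.range (P.N n), if a < P.pt n j ∧ P.pt n j ≤ b then w n j else 0 := by
    intro n a b hab
    rw [hFdef]
    simp only
    rw [← Finset.sum_sub_distrib]
    apply Finset.sum_congr rfl
    intro j _
    by_cases h1 : P.pt n j ≤ a
    · rw [if_pos h1, if_pos (h1.trans hab), if_neg (by rintro ⟨h2, _⟩; linarith), sub_self]
    · rw [if_neg h1]
      push_neg at h1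
      by_cases h2 : P.pt n j ≤ b
      · rw [if_pos h2, if_pos ⟨h1, h2⟩, sub_zero]
      · rw [if_neg h2, if_neg (by rintro ⟨_, h3⟩; exact h2 h3), sub_self]
  -- D_n → D
  set D : ℝ := ∑ i ∈ Finset.range K, f (s i) * (V (s (i + 1)) - V (s i)) with hDdef
  have hDn : Tendsto (fun n => ∑ i ∈ Finset.range K, f (s i) * (F n (s (i + 1)) - F n (s i)))
      atTop (nhds D) := by
    apply tendsto_finset_sum
    intro i hi
    rw [Finset.mem_range] at hi
    exact ((hvar _ (hsmem (i+1) hi)).sub (hvar _ (hsmem i (by omega)))).const_mul _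
  -- |J_n - D_n| ≤ ε' * F n t
  have hJD : ∀ n, |(∑ j ∈ Finset.range (P.N n),
        if 0 < P.pt n j ∧ P.pt n j ≤ t then f (P.pt n j) * w n j else 0)
      - ∑ i ∈ Finset.range K, f (s i) * (F n (s (i + 1)) - F n (s i))| ≤ ε' * F n t := by
    intro n
    have hJ : (∑ j ∈ Finset.range (P.N n),
        if 0 < P.pt n j ∧ P.pt n j ≤ t then f (P.pt n j) * w n j else 0)
        = ∑ i ∈ Finset.range K, ∑ j ∈ Finset.range (P.N n),
            if s i < P.pt n j ∧ P.pt n j ≤ s (i + 1) then f (P.pt n j) * w n j else 0 := by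
      rw [Finset.sum_comm]
      apply Finset.sum_congr rfl
      intro j _
      rw [sum_if_step s hsmono K (P.pt n j) (f (P.pt n j) * w n j), hs0, hsK]
    have hD : (∑ i ∈ Finset.range K, f (s i) * (F n (s (i + 1)) - F n (s i)))
        = ∑ i ∈ Finset.range K, ∑ j ∈ Finset.range (P.N n),
            if s i < P.pt n j ∧ P.pt n j ≤ s (i + 1) then f (s i) * w n j else 0 := by
      apply Finset.sum_congr rfl
      intro i _
      rw [hFincr n _ _ (hsmono (Nat.le_succ i)), Finset.mul_sum]
      apply Finset.sum_congr rfl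
      intro j _
      split_ifs <;> simp
    rw [hJ, hD, ← Finset.sum_sub_distrib]
    have hbound : ∀ i ∈ Finset.range K,
        |(∑ j ∈ Finset.range (P.N n),
            if s i < P.pt n j ∧ P.pt n j ≤ s (i + 1) then f (P.pt n j) * w n j else 0)
          - ∑ j ∈ Finset.range (P.N n),
            if s i < P.pt n j ∧ P.pt n j ≤ s (i + 1) then f (s i) * w n j else 0|
        ≤ ∑ j ∈ Finset.range (P.N n),
            if s i < P.pt n j ∧ P.pt n j ≤ s (i + 1) then ε' * w n j else 0 := by
      intro i hi
      rw [Finset.mem_range] at hi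
      rw [← Finset.sum_sub_distrib]
      refine (Finset.abs_sum_le_sum_abs _ _).trans (Finset.sum_le_sum ?_)
      intro j hj
      rw [Finset.mem_range] at hj
      by_cases hc : s i < P.pt n j ∧ P.pt n j ≤ s (i + 1)
      · rw [if_pos hc, if_pos hc, if_pos hc, ← sub_mul, abs_mul,
          abs_of_nonneg (hw n j)]
        apply mul_le_mul_of_nonneg_right _ (hw n j)
        have hmem1 : P.pt n j ∈ Icc (0 : ℝ) T := ptP_mem P n hj.le
        have hmem2 : s i ∈ Icc (0 : ℝ) T := hsmem i hi.le
        have hdist : dist (P.pt n j) (s i) < δ := by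
          rw [Real.dist_eq, abs_of_nonneg (by linarith [hc.1])]
          have := hstep i
          have h2 := hc.2
          linarith [hgrid]
        have := hδ _ hmem1 _ hmem2 hdist
        rw [Real.dist_eq] at this
        exact this.le
      · rw [if_neg hc, if_neg hc, if_neg hc, sub_zero, abs_zero]
    refine (Finset.abs_sum_le_sum_abs _ _).trans ?_
    refine (Finset.sum_le_sum hbound).trans ?_
    rw [Finset.sum_comm]
    have : ∀ j ∈ Finset.range (P.N n),
        (∑ i ∈ Finset.range K, if s i < P.pt n j ∧ P.pt n j ≤ s (i + 1) then ε' * w n j else 0)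
          = if 0 < P.pt n j ∧ P.pt n j ≤ t then ε' * w n j else 0 := by
      intro j _
      rw [sum_if_step s hsmono K (P.pt n j) (ε' * w n j), hs0, hsK]
    rw [Finset.sum_congr rfl this, hFdef]
    simp only
    rw [Finset.mul_sum]
    apply Finset.sum_le_sum
    intro j _
    split_ifs with h1 h2 h2
    · exact le_rfl
    · exact absurd h1.2 h2
    · have := mul_nonneg hε'.le (hw n j); linarith
    · simp
    -- |D - I| ≤ ε' * (V t - V 0)
  set I : ℝ := ∫ u in Ioc (0 : ℝ) t, f u ∂V.measure with hIdef
  have hint : ∀ i, IntervalIntegrable f V.measure (s i) (s (i + 1)) :=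
    fun i => hf.intervalIntegrable _ _
  have hIsum : I = ∑ i ∈ Finset.range K, ∫ u in Ioc (s i) (s (i + 1)), f u ∂V.measure := by
    have h1 := intervalIntegral.sum_integral_adjacent_intervals (a := s) (μ := V.measure)
      (n := K) (fun k _ => hint k)
    rw [hs0, hsK] at h1
    rw [hIdef, ← intervalIntegral.integral_of_le ht0, ← h1]
    apply Finset.sum_congr rfl
    intro i _
    rw [intervalIntegral.integral_of_le (hsmono (Nat.le_succ i))]
  have hmIoc : ∀ i, V.measure (Ioc (s i) (s (i + 1)))
      = ENNReal.ofReal (V (s (i + 1)) - V (s i)) := fun i => V.measure_Ioc _ _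
  have hVmono : ∀ i, V (s i) ≤ V (s (i + 1)) := fun i => V.mono (hsmono (Nat.le_succ i))
  have hmfin : ∀ i, V.measure (Ioc (s i) (s (i + 1))) < ⊤ := by
    intro i; rw [hmIoc i]; exact ENNReal.ofReal_lt_top
  have htoReal : ∀ i, (V.measure (Ioc (s i) (s (i + 1)))).toReal = V (s (i + 1)) - V (s i) := by
    intro i
    rw [hmIoc i, ENNReal.toReal_ofReal (by linarith [hVmono i])]
  have hDI : |D - I| ≤ ε' * (V t - V 0) := by
    rw [hIsum, hDdef, ← Finset.sum_sub_distrib]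
    have hterm : ∀ i ∈ Finset.range K,
        |f (s i) * (V (s (i + 1)) - V (s i)) - ∫ u in Ioc (s i) (s (i + 1)), f u ∂V.measure|
          ≤ ε' * (V (s (i + 1)) - V (s i)) := by
      intro i hi
      rw [Finset.mem_range] at hi
      have hconst : f (s i) * (V (s (i + 1)) - V (s i))
          = ∫ _ in Ioc (s i) (s (i + 1)), f (s i) ∂V.measure := by
        rw [setIntegral_const, measureReal_def, htoReal i, smul_eq_mul, mul_comm]
      rw [hconst, ← integral_sub (integrableOn_const (C := f (s i)) (hmfin i).ne)
        (hf.integrableOn_Ioc)]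
      have := norm_setIntegral_le_of_norm_le_const (μ := V.measure)
        (s := Ioc (s i) (s (i + 1))) (C := ε')
        (f := fun u => f (s i) - f u) (hmfin i) ?_
      · rw [Real.norm_eq_abs] at this
        calc |∫ u in Ioc (s i) (s (i + 1)), (f (s i) - f u) ∂V.measure|
            ≤ ε' * (V.measure (Ioc (s i) (s (i + 1)))).toReal := this
          _ = ε' * (V (s (i + 1)) - V (s i)) := by rw [htoReal i]
      · intro u hu
        rw [Real.norm_eq_abs]
        have humem : u ∈ Icc (0 : ℝ) T := by
          constructor
          · linarith [hu.1, (hsmem i hi.le).1]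
          · linarith [hu.2, (hsmem (i + 1) hi).2]
        have hdist : dist (s i) u < δ := by
          rw [Real.dist_eq, abs_of_nonpos (by linarith [hu.1])]
          have := hstep i
          linarith [hu.2, hgrid]
        have := hδ _ (hsmem i hi.le) _ humem hdist
        rw [Real.dist_eq] at this
        exact this.le
    calc |∑ i ∈ Finset.range K,
          (f (s i) * (V (s (i + 1)) - V (s i)) - ∫ u in Ioc (s i) (s (i + 1)), f u ∂V.measure)|
        ≤ ∑ i ∈ Finset.range K,
          |f (s i) * (V (s (i + 1)) - V (s i)) - ∫ u in Ioc (s i) (s (i + 1)), f u ∂V.measure| :=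
          Finset.abs_sum_le_sum_abs _ _
      _ ≤ ∑ i ∈ Finset.range K, ε' * (V (s (i + 1)) - V (s i)) := Finset.sum_le_sum hterm
      _ = ε' * ∑ i ∈ Finset.range K, (V (s (i + 1)) - V (s i)) := by rw [Finset.mul_sum]
      _ = ε' * (V (s K) - V (s 0)) := by rw [Finset.sum_range_sub (fun i => V (s i))]
      _ = ε' * (V t - V 0) := by rw [hs0, hsK]
  -- eventual bound on F n t
  rw [Metric.tendsto_atTop] at hDn
  obtain ⟨N1, hN1⟩ := hDn (ε / 4) (by positivity)
  obtain ⟨N2, hN2⟩ := Metric.tendsto_atTop.mp (hvar t ⟨ht0, htT⟩) 1 one_pos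
  refine ⟨max N1 N2, fun n hn => ?_⟩
  have hn1 : N1 ≤ n := le_of_max_le_left hn
  have hn2 : N2 ≤ n := le_of_max_le_right hn
  have hFt : F n t ≤ V t + 1 := by
    have := hN2 n hn2
    rw [Real.dist_eq] at this
    have h2 := abs_lt.mp this
    rw [hFdef]; simp only
    linarith [h2.1, h2.2]
  have h1 := hJD n
  have h2 := hN1 n hn1
  rw [Real.dist_eq] at h2 ⊢
  have hb1 : ε' * F n t ≤ ε / 4 := by
    have hFt' : F n t ≤ Cb := by
      rw [hCbdef]
      have := le_abs_self (V t)
      have := abs_nonneg (V 0)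
      linarith
    calc ε' * F n t ≤ ε' * Cb := mul_le_mul_of_nonneg_left hFt' hε'.le
      _ = ε / 4 := by rw [hε'def]; field_simp
  have hb2 : ε' * (V t - V 0) ≤ ε / 4 := by
    have hVt : V t - V 0 ≤ Cb := by
      rw [hCbdef]
      have := le_abs_self (V t)
      have h3 := neg_abs_le (V 0)
      linarith
    calc ε' * (V t - V 0) ≤ ε' * Cb := mul_le_mul_of_nonneg_left hVt hε'.le
      _ = ε / 4 := by rw [hε'def]; field_simp
  set Jn := ∑ j ∈ Finset.range (P.N n),
    if 0 < P.pt n j ∧ P.pt n j ≤ t then f (P.pt n j) * w n j else 0 with hJndef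
  set Dn := ∑ i ∈ Finset.range K, f (s i) * (F n (s (i + 1)) - F n (s i)) with hDndef
  calc |Jn - I| = |(Jn - Dn) + (Dn - D) + (D - I)| := by ring_nf
    _ ≤ |Jn - Dn| + |Dn - D| + |D - I| := by
        refine (abs_add_le _ _).trans ?_
        have := abs_add_le (Jn - Dn) (Dn - D)
        linarith
    _ < ε / 4 + ε / 4 + ε / 4 := by
        have := h1.trans hb1
        have := hDI.trans hb2
        linarith [h2]
    _ < ε := by linarith

/-- Occupation density formula: if `S ∈ V_p(π)` with continuous nondecreasing `p`-th
variation `V = [S]^p` (realized as a continuous Stieltjes function) and `S` admits a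
continuous local time `L` of order `p` along `π`, then for every continuous `g : ℝ → ℝ`
and `t ∈ [0,T]`, `∫_0^t g(S(u)) d[S]^p(u) = p ∫_ℝ g(x) L_t(x) dx`. -/
theorem occupation_density_formula {T : ℝ} (hT : 0 < T) (P : PartitionSeq T)
    (p : ℕ) (hp : Even p) (hp2 : 2 ≤ p)
    (S : ℝ → ℝ) (hS : ContinuousOn S (Icc 0 T))
    (V : StieltjesFunction ℝ) (hVc : Continuous ⇑V)
    (hvar : ∀ t ∈ Icc (0 : ℝ) T, Tendsto (fun n => pvarSum S P (p : ℝ) n t) atTop (nhds (V t)))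
    (L : ℝ → ℝ → ℝ) (hL : HasCLT P p S L) :
    ∀ g : ℝ → ℝ, Continuous g → ∀ t ∈ Icc (0 : ℝ) T,
      (∫ u in Ioc (0 : ℝ) t, g (S u) ∂V.measure) = (p : ℝ) * ∫ x, g x * L t x := by
  intro g hg t ht
  obtain ⟨hosc, hunif, hLcont⟩ := hL
  obtain ⟨ht0, htT⟩ := ht
  -- global bound on S over [0,T]
  obtain ⟨C, hC⟩ := isCompact_Icc.exists_bound_of_continuousOn hS
  have hC0 : 0 ≤ C := le_trans (norm_nonneg _) (hC 0 ⟨le_rfl, hT.le⟩)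
  have hSC : ∀ u ∈ Icc (0 : ℝ) T, |S u| ≤ C := by
    intro u hu; simpa [Real.norm_eq_abs] using hC u hu
  -- oscillation facts
  have hosc_ub : ∀ n, (oscP S P n) ∈ upperBounds ∅ ∨ True := fun n => Or.inr trivial
  have hosc_bdd : ∀ n, BddAbove {y | ∃ j < P.N n, ∃ u ∈ Icc (P.pt n j) (P.pt n (j + 1)),
      ∃ v ∈ Icc (P.pt n j) (P.pt n (j + 1)), y = |S u - S v|} := by
    intro n
    refine ⟨2 * C, ?_⟩
    rintro y ⟨j, hj, u, hu, v, hv, rfl⟩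
    have hj1 : j + 1 ≤ P.N n := hj
    have hmemu : u ∈ Icc (0 : ℝ) T := by
      constructor
      · linarith [hu.1, (ptP_mem P n hj.le).1]
      · linarith [hu.2, (ptP_mem P n hj1).2]
    have hmemv : v ∈ Icc (0 : ℝ) T := by
      constructor
      · linarith [hv.1, (ptP_mem P n hj.le).1]
      · linarith [hv.2, (ptP_mem P n hj1).2]
    calc |S u - S v| ≤ |S u| + |S v| := abs_sub _ _
      _ ≤ 2 * C := by linarith [hSC u hmemu, hSC v hmemv]
  have hosc_ge : ∀ n j, j < P.N n →
      |S (P.pt n (j + 1)) - S (P.pt n j)| ≤ oscP S P n := by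
    intro n j hj
    apply le_csSup (hosc_bdd n)
    exact ⟨j, hj, P.pt n (j + 1), ⟨(P.pt_mono n j hj).le, le_rfl⟩,
      P.pt n j, ⟨le_rfl, (P.pt_mono n j hj).le⟩, rfl⟩
  have hosc_nonneg : ∀ n, 0 ≤ oscP S P n := by
    intro n
    apply le_csSup (hosc_bdd n)
    exact ⟨0, P.pos n, P.pt n 0, ⟨le_rfl, (P.pt_mono n 0 (P.pos n)).le⟩,
      P.pt n 0, ⟨le_rfl, (P.pt_mono n 0 (P.pos n)).le⟩, by simp⟩
  -- the weights
  set w : ℕ → ℕ → ℝ := fun n j => |S (P.pt n (j + 1)) - S (P.pt n j)| ^ p with hwdef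
  have hw0 : ∀ n j, 0 ≤ w n j := fun n j => pow_nonneg (abs_nonneg _) p
  have hpv : ∀ n r, pvarSum S P (p : ℝ) n r
      = ∑ j ∈ Finset.range (P.N n), if P.pt n j ≤ r then w n j else 0 := by
    intro n r
    unfold pvarSum
    apply Finset.sum_congr rfl
    intro j _
    split_ifs with h
    · rw [hwdef]; exact Real.rpow_natCast _ p
    · rfl
  have hvar' : ∀ s ∈ Icc (0 : ℝ) T, Tendsto
      (fun n => ∑ j ∈ Finset.range (P.N n), if P.pt n j ≤ s then w n j else 0)
      atTop (nhds (V s)) := by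
    intro s hs
    exact (hvar s hs).congr (fun n => hpv n s)
  -- continuous extension of S
  set Sc : ℝ → ℝ := fun u => S (max 0 (min u T)) with hScdef
  have hScont : Continuous Sc := by
    apply hS.comp_continuous (continuous_const.max (continuous_id.min continuous_const))
    intro x
    exact ⟨le_max_left _ _, max_le hT.le (min_le_right _ _)⟩
  have hSceq : ∀ u ∈ Icc (0 : ℝ) T, Sc u = S u := by
    intro u hu
    rw [hScdef]
    simp only
    rw [min_eq_left hu.2, max_eq_right hu.1]
  set f : ℝ → ℝ := fun u => g (Sc u) with hfdef
  have hf : Continuous f := hg.comp hScont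
  have hfeq : ∀ u ∈ Icc (0 : ℝ) T, f u = g (S u) := by
    intro u hu; rw [hfdef]; simp only; rw [hSceq u hu]
  -- step C applied
  have hJn := stepC P w hw0 V hvar' f hf t ⟨ht0, htT⟩
  set I : ℝ := ∫ u in Ioc (0 : ℝ) t, f u ∂V.measure with hIdef
  have hIeq : I = ∫ u in Ioc (0 : ℝ) t, g (S u) ∂V.measure := by
    apply setIntegral_congr_fun measurableSet_Ioc
    intro u hu
    exact hfeq u ⟨hu.1.le, hu.2.trans htT⟩
  -- A_n and its limit
  set An : ℕ → ℝ := fun n => ∑ j ∈ Finset.range (P.N n),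
    if P.pt n j ≤ t then g (S (P.pt n j)) * w n j else 0 with hAndef
  have hsplit : ∀ n, An n = (∑ j ∈ Finset.range (P.N n),
      if 0 < P.pt n j ∧ P.pt n j ≤ t then f (P.pt n j) * w n j else 0)
      + g (S (P.pt n 0)) * w n 0 := by
    intro n
    have : An n - (∑ j ∈ Finset.range (P.N n),
        if 0 < P.pt n j ∧ P.pt n j ≤ t then f (P.pt n j) * w n j else 0)
        = g (S (P.pt n 0)) * w n 0 := by
      rw [hAndef]
      simp only
      rw [← Finset.sum_sub_distrib]
      rw [Finset.sum_eq_single 0]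
      · rw [P.pt_zero n, if_pos ht0, if_neg (by rintro ⟨h1, _⟩; exact absurd h1 (lt_irrefl 0)),
          sub_zero]
      · intro j hj hj0
        rw [Finset.mem_range] at hj
        have hjpos : 0 < P.pt n j := ptP_pos P n (Nat.one_le_iff_ne_zero.mpr hj0) hj.le
        by_cases h : P.pt n j ≤ t
        · rw [if_pos h, if_pos ⟨hjpos, h⟩, hfeq _ (ptP_mem P n hj.le), sub_self]
        · rw [if_neg h, if_neg (by rintro ⟨_, h2⟩; exact h h2), sub_self]
      · intro h0
        exact absurd (Finset.mem_range.mpr (P.pos n)) h0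
    linarith [this]
  have htail : Tendsto (fun n => g (S (P.pt n 0)) * w n 0) atTop (nhds 0) := by
    have habs : Tendsto (fun n => |S (P.pt n 1) - S (P.pt n 0)|) atTop (nhds 0) := by
      apply squeeze_zero (fun n => abs_nonneg _) (fun n => hosc_ge n 0 (P.pos n)) hosc
    have hpow : Tendsto (fun n => w n 0) atTop (nhds 0) := by
      have := habs.pow p
      rwa [zero_pow (by omega : p ≠ 0)] at this
    have hconst : ∀ n, g (S (P.pt n 0)) = g (S 0) := fun n => by rw [P.pt_zero n]
    have := hpow.const_mul (g (S 0))
    rw [mul_zero] at this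
    exact this.congr (fun n => by rw [hconst n])
  have hAn : Tendsto An atTop (nhds I) := by
    have := hJn.add htail
    rw [add_zero] at this
    exact this.congr (fun n => (hsplit n).symm)
    -- integrability helpers
  have hIOn : ∀ (F : ℝ → ℝ), Continuous F → ∀ a b : ℝ,
      IntegrableOn F (Set.uIoc a b) volume := by
    intro F hF a b
    rw [Set.uIoc]
    exact hF.integrableOn_Ioc
  have hcont1 : ∀ c : ℝ, Continuous (fun y : ℝ => g y * |c - y| ^ (p - 1)) := by
    intro c
    exact hg.mul (((continuous_const.sub continuous_id).abs).pow (p - 1))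
  have hgd : ∀ n r, (fun x => g x * discLT S P p n r x)
      = fun x => ∑ j ∈ Finset.range (P.N n),
          if P.pt n j ≤ r then
            (Set.uIoc (S (P.pt n j)) (S (P.pt n (j + 1)))).indicator
              (fun y => g y * |S (P.pt n (j + 1)) - y| ^ (p - 1)) x
          else 0 := by
    intro n r
    funext x
    rw [discLT, Finset.mul_sum]
    apply Finset.sum_congr rfl
    intro j _
    split_ifs with h
    · by_cases hx : x ∈ Set.uIoc (S (P.pt n j)) (S (P.pt n (j + 1)))
      · rw [Set.indicator_of_mem hx, Set.indicator_of_mem hx]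
      · rw [Set.indicator_of_notMem hx, Set.indicator_of_notMem hx, mul_zero]
    · rw [mul_zero]
  have hterm_int : ∀ n r j, Integrable (fun x =>
      if P.pt n j ≤ r then
        (Set.uIoc (S (P.pt n j)) (S (P.pt n (j + 1)))).indicator
          (fun y => g y * |S (P.pt n (j + 1)) - y| ^ (p - 1)) x
      else 0) volume := by
    intro n r j
    by_cases h : P.pt n j ≤ r
    · simp only [if_pos h]
      exact (hIOn _ (hcont1 _) _ _).integrable_indicator measurableSet_uIoc
    · simp only [if_neg h]
      exact integrable_zero _ _ _
  have hdint : ∀ n r, Integrable (fun x => g x * discLT S P p n r x) volume := by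
    intro n r
    rw [hgd n r]
    exact integrable_finset_sum _ (fun j _ => hterm_int n r j)
  -- support facts
  have hdC : ∀ n (r : ℝ) x, x ∉ Icc (-C) C → discLT S P p n r x = 0 := by
    intro n r x hx
    rw [discLT]
    apply Finset.sum_eq_zero
    intro j hj
    rw [Finset.mem_range] at hj
    have hnot : x ∉ Set.uIoc (S (P.pt n j)) (S (P.pt n (j + 1))) := by
      intro hmem
      apply hx
      have h1 := hSC _ (ptP_mem P n hj.le)
      have h2 := hSC _ (ptP_mem P n hj)
      rw [Set.mem_uIoc] at hmem
      rcases hmem with ⟨ha, hb⟩ | ⟨ha, hb⟩ <;>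
        constructor <;> [skip; skip; skip; skip] <;>
          first
            | (rcases abs_le.mp h1 with ⟨u1, u2⟩; rcases abs_le.mp h2 with ⟨v1, v2⟩; linarith)
    rw [Set.indicator_of_notMem hnot]
    split_ifs <;> rfl
  have hLzero : ∀ x, x ∉ Icc (-C) C → L t x = 0 := by
    intro x hx
    have h1 : Tendsto (fun n => discLT S P p n t x) atTop (nhds (L t x)) :=
      (hunif t ⟨ht0, htT⟩).tendsto_at x
    have h2 : Tendsto (fun n => discLT S P p n t x) atTop (nhds 0) := by
      have : (fun n => discLT S P p n t x) = fun _ => (0 : ℝ) :=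
        funext fun n => hdC n t x hx
      rw [this]; exact tendsto_const_nhds
    exact tendsto_nhds_unique h1 h2
  have hLt_cont : Continuous (L t) :=
    hLcont.comp (continuous_const.prodMk continuous_id)
  have hgL_int : Integrable (fun x => g x * L t x) volume := by
    apply (hg.mul hLt_cont).integrable_of_hasCompactSupport
    apply HasCompactSupport.intro isCompact_Icc
    intro x hx
    rw [Pi.mul_apply, hLzero x hx, mul_zero]
  -- bound for g on [-C, C]
  obtain ⟨G, hG⟩ := (isCompact_Icc (a := -C) (b := C)).exists_bound_of_continuousOn
    hg.continuousOn
  have hG0 : 0 ≤ G := le_trans (norm_nonneg _) (hG 0 ⟨neg_nonpos.mpr hC0, hC0⟩)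
  -- Step A : Bn → p * ∫ g L
  set Bn : ℕ → ℝ := fun n => (p : ℝ) * ∫ x, g x * discLT S P p n t x with hBndef
  have hBn : Tendsto Bn atTop (nhds ((p : ℝ) * ∫ x, g x * L t x)) := by
    rw [Metric.tendsto_atTop]
    intro ε hε
    set bd : ℝ := (p : ℝ) * (G * (2 * C)) with hbddef
    have hbd0 : 0 ≤ bd := by positivity
    set ε'' : ℝ := ε / (bd + 1) with hε''def
    have hε''0 : 0 < ε'' := by positivity
    obtain ⟨N0, hN0⟩ := eventually_atTop.mp
      (Metric.tendstoUniformly_iff.mp (hunif t ⟨ht0, htT⟩) ε'' hε''0)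
    refine ⟨N0, fun n hn => ?_⟩
    have key : |(∫ x, g x * discLT S P p n t x) - ∫ x, g x * L t x| ≤ G * ε'' * (2 * C) := by
      rw [← integral_sub (hdint n t) hgL_int]
      have hzero : ∀ x ∉ Icc (-C) C,
          g x * discLT S P p n t x - g x * L t x = 0 := by
        intro x hx
        simp [hdC n t x hx, hLzero x hx]
      rw [← setIntegral_eq_integral_of_forall_compl_eq_zero hzero]
      have hfin : volume (Icc (-C) C) < ⊤ := isCompact_Icc.measure_lt_top
      have hbnd : ∀ x ∈ Icc (-C) C,
          ‖g x * discLT S P p n t x - g x * L t x‖ ≤ G * ε'' := by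
        intro x hx
        rw [← mul_sub, Real.norm_eq_abs, abs_mul]
        apply mul_le_mul _ _ (abs_nonneg _) hG0
        · rw [← Real.norm_eq_abs]; exact hG x hx
        · have := hN0 n hn x
          rw [Real.dist_eq, abs_sub_comm] at this
          exact this.le
      have := norm_setIntegral_le_of_norm_le_const hfin hbnd
      rw [Real.norm_eq_abs] at this
      refine this.trans ?_
      rw [measureReal_def, Real.volume_Icc, ENNReal.toReal_ofReal (by linarith)]
      apply mul_le_mul_of_nonneg_left _ (by positivity)
      linarith
    rw [Real.dist_eq, hBndef]
    simp only
    rw [← mul_sub, abs_mul, abs_of_nonneg (Nat.cast_nonneg p)]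
    calc (p : ℝ) * |(∫ x, g x * discLT S P p n t x) - ∫ x, g x * L t x|
        ≤ (p : ℝ) * (G * ε'' * (2 * C)) :=
          mul_le_mul_of_nonneg_left key (Nat.cast_nonneg p)
      _ = ε'' * bd := by rw [hbddef]; ring
      _ < ε := by
          rw [hε''def]
          rw [div_mul_eq_mul_div, div_lt_iff₀ (by positivity)]
          nlinarith
    -- Step B : An - Bn → 0
  have hppos : (0 : ℝ) < p := by exact_mod_cast (by omega : 0 < p)
  have hK2 : ∀ a b : ℝ,
      (p : ℝ) * ∫ x in Set.uIoc a b, |b - x| ^ (p - 1) = |b - a| ^ p := by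
    intro a b
    rw [intK (p - 1) a b]
    have h1 : p - 1 + 1 = p := by omega
    have h2 : ((p - 1 : ℕ) : ℝ) + 1 = (p : ℝ) := by
      rw [Nat.cast_sub (by omega : 1 ≤ p)]; ring
    rw [h1, h2]
    field_simp
  have hBsum : ∀ n, Bn n = ∑ j ∈ Finset.range (P.N n),
      if P.pt n j ≤ t then
        (p : ℝ) * ∫ x in Set.uIoc (S (P.pt n j)) (S (P.pt n (j + 1))),
          g x * |S (P.pt n (j + 1)) - x| ^ (p - 1)
      else 0 := by
    intro n
    rw [hBndef]
    simp only
    rw [hgd n t, integral_finset_sum _ (fun j _ => hterm_int n t j), Finset.mul_sum]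
    apply Finset.sum_congr rfl
    intro j _
    by_cases h : P.pt n j ≤ t
    · simp only [if_pos h]
      rw [integral_indicator measurableSet_uIoc]
    · simp only [if_neg h, integral_zero, mul_zero]
  have hgu := (isCompact_Icc (a := -C) (b := C)).uniformContinuousOn_of_continuous
    hg.continuousOn
  rw [Metric.uniformContinuousOn_iff] at hgu
  have hAB : Tendsto (fun n => An n - Bn n) atTop (nhds 0) := by
    rw [Metric.tendsto_atTop]
    intro ε hε
    set ε' : ℝ := ε / (2 * (|V t| + 2)) with hε'def
    have hε'0 : 0 < ε' := by positivity
    obtain ⟨δ, hδ0, hδ⟩ := hgu ε' hε'0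
    obtain ⟨N1, hN1⟩ := Metric.tendsto_atTop.mp hosc δ hδ0
    obtain ⟨N2, hN2⟩ := Metric.tendsto_atTop.mp (hvar' t ⟨ht0, htT⟩) 1 one_pos
    refine ⟨max N1 N2, fun n hn => ?_⟩
    have hoscn : oscP S P n < δ := by
      have := hN1 n (le_of_max_le_left hn)
      rw [Real.dist_eq, sub_zero] at this
      exact lt_of_abs_lt this
    have hFt : (∑ j ∈ Finset.range (P.N n), if P.pt n j ≤ t then w n j else 0)
        ≤ |V t| + 1 := by
      have h1 := hN2 n (le_of_max_le_right hn)
      rw [Real.dist_eq] at h1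
      have h2 := (abs_lt.mp h1).2
      have h3 := le_abs_self (V t)
      linarith
    have hcore : ∀ j, j < P.N n →
        |g (S (P.pt n j)) * w n j
          - (p : ℝ) * ∫ x in Set.uIoc (S (P.pt n j)) (S (P.pt n (j + 1))),
              g x * |S (P.pt n (j + 1)) - x| ^ (p - 1)|
        ≤ ε' * w n j := by
      intro j hj
      set a := S (P.pt n j) with hadef
      set b := S (P.pt n (j + 1)) with hbdef
      have haC : |a| ≤ C := hSC _ (ptP_mem P n hj.le)
      have hbC : |b| ≤ C := hSC _ (ptP_mem P n hj)
      have hba : |b - a| ≤ oscP S P n := hosc_ge n j hj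
      have hwnj : w n j = |b - a| ^ p := rfl
      have hq : ∀ x : ℝ, (0 : ℝ) ≤ |b - x| ^ (p - 1) :=
        fun x => pow_nonneg (abs_nonneg _) _
      have hcontq : Continuous (fun x : ℝ => |b - x| ^ (p - 1)) :=
        ((continuous_const.sub continuous_id).abs).pow _
      have e1 : g a * w n j
          = (p : ℝ) * ∫ x in Set.uIoc a b, g a * |b - x| ^ (p - 1) := by
        rw [integral_const_mul, hwnj, ← hK2 a b]; ring
      rw [e1, ← mul_sub,
        ← integral_sub ((hIOn (fun x => g a * |b - x| ^ (p - 1)) (continuous_const.mul hcontq) a b))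
          (hIOn (fun x => g x * |b - x| ^ (p - 1)) (hcont1 b) a b)]
      rw [abs_mul, abs_of_nonneg (Nat.cast_nonneg p)]
      have hb1 : |∫ x in Set.uIoc a b,
            (g a * |b - x| ^ (p - 1) - g x * |b - x| ^ (p - 1))|
          ≤ ∫ x in Set.uIoc a b, ε' * |b - x| ^ (p - 1) := by
        rw [← Real.norm_eq_abs]
        refine (norm_integral_le_integral_norm _).trans ?_
        have hint1 : IntegrableOn
            (fun x => ‖g a * |b - x| ^ (p - 1) - g x * |b - x| ^ (p - 1)‖)
            (Set.uIoc a b) volume :=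
          hIOn _ (((continuous_const.mul hcontq).sub (hcont1 b)).norm) a b
        have hint2 : IntegrableOn (fun x => ε' * |b - x| ^ (p - 1))
            (Set.uIoc a b) volume := hIOn _ (continuous_const.mul hcontq) a b
        refine setIntegral_mono_on (hf := hint1) (hg := hint2) measurableSet_uIoc ?_
        intro x hx
        rw [Set.mem_uIoc] at hx
        rw [Real.norm_eq_abs, ← sub_mul, abs_mul, abs_of_nonneg (hq x)]
        apply mul_le_mul_of_nonneg_right _ (hq x)
        rcases abs_le.mp haC with ⟨u1, u2⟩
        rcases abs_le.mp hbC with ⟨v1, v2⟩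
        have hxmem : x ∈ Icc (-C) C := by
          rcases hx with ⟨h1, h2⟩ | ⟨h1, h2⟩ <;> constructor <;> linarith
        have hamem : a ∈ Icc (-C) C := ⟨u1, u2⟩
        have habx : |a - x| ≤ |b - a| := by
          rcases hx with ⟨h1, h2⟩ | ⟨h1, h2⟩
          · rw [abs_of_nonpos (by linarith)]
            have := le_abs_self (b - a); linarith
          · rw [abs_of_nonneg (by linarith)]
            have := neg_abs_le (b - a); linarith
        have hdist : dist a x < δ := by
          rw [Real.dist_eq]
          calc |a - x| ≤ |b - a| := habx
            _ ≤ oscP S P n := hba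
            _ < δ := hoscn
        exact (hδ a hamem x hxmem hdist).le
      have e2 : ∫ x in Set.uIoc a b, ε' * |b - x| ^ (p - 1)
          = ε' * ∫ x in Set.uIoc a b, |b - x| ^ (p - 1) := integral_const_mul _ _
      calc (p : ℝ) * |∫ x in Set.uIoc a b,
            (g a * |b - x| ^ (p - 1) - g x * |b - x| ^ (p - 1))|
          ≤ (p : ℝ) * ∫ x in Set.uIoc a b, ε' * |b - x| ^ (p - 1) :=
            mul_le_mul_of_nonneg_left hb1 (Nat.cast_nonneg p)
        _ = ε' * ((p : ℝ) * ∫ x in Set.uIoc a b, |b - x| ^ (p - 1)) := by rw [e2]; ring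
        _ = ε' * w n j := by rw [hK2 a b, hwnj]
    have hsum : |An n - Bn n|
        ≤ ε' * ∑ j ∈ Finset.range (P.N n), (if P.pt n j ≤ t then w n j else 0) := by
      rw [hAndef, hBsum n]
      simp only
      rw [← Finset.sum_sub_distrib, Finset.mul_sum]
      refine (Finset.abs_sum_le_sum_abs _ _).trans (Finset.sum_le_sum ?_)
      intro j hj
      rw [Finset.mem_range] at hj
      by_cases h : P.pt n j ≤ t
      · rw [if_pos h, if_pos h, if_pos h]
        exact hcore j hj
      · rw [if_neg h, if_neg h, if_neg h, sub_zero, abs_zero, mul_zero]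
    rw [Real.dist_eq, sub_zero]
    calc |An n - Bn n|
        ≤ ε' * ∑ j ∈ Finset.range (P.N n), (if P.pt n j ≤ t then w n j else 0) := hsum
      _ ≤ ε' * (|V t| + 1) := mul_le_mul_of_nonneg_left hFt hε'0.le
      _ < ε := by
          rw [hε'def]
          rw [div_mul_eq_mul_div, div_lt_iff₀ (by positivity)]
          nlinarith [abs_nonneg (V t)]
  -- assemble
  have hBlim : Tendsto Bn atTop (nhds I) := by
    have h := hAn.sub hAB
    rw [sub_zero] at h
    exact h.congr (fun n => by ring)
  rw [← hIeq]
  exact tendsto_nhds_unique hBlim hBn
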